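/- Let C \subseteq \mathbb{H}(n,q) be a code of cardinality M \ge 2 and h: [-1,1) \to (0,\infty) a function. Suppose f(t) = \sum_{i=0}^n f_i Q_i^{(n,q)}(t) is a real polynomial with f(t) \le h(t) for all t \in T_n = \{-1+2i/n : 0 \le i \le n\}, and f_i \ge 0 for all i \ge 1. Then E(n,C;h) := \frac{1}{|C|}\sum_{x,y \in C, x \ne y} h(\langle x,y\rangle) \ge f_0 M - f(1). -/

import Mathlib

/-- Generalized binomial coefficient `C(x, j)` as a polynomial expression in a real `x`. -/
noncomputable def binomPoly (x : ℝ) (j : ℕ) : ℝ :=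
  (∏ m ∈ Finset.range j, (x - (m : ℝ))) / (Nat.factorial j : ℝ)

/-- Krawtchouk polynomial `K_i^{(n,q)}(z)`. -/
noncomputable def kraw (n q i : ℕ) (z : ℝ) : ℝ :=
  ∑ j ∈ Finset.range (i + 1),
    (-1 : ℝ) ^ j * ((q : ℝ) - 1) ^ (i - j) * binomPoly z j * binomPoly ((n : ℝ) - z) (i - j)

/-- Normalized Krawtchouk polynomial `Q_i^{(n,q)}(t)`. -/
noncomputable def Qnorm (n q i : ℕ) (t : ℝ) : ℝ :=
  kraw n q i ((n : ℝ) * (1 - t) / 2) / (((q : ℝ) - 1) ^ i * (n.choose i : ℝ))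

/-- Hamming distance between two words of `ℍ(n,q)`. -/
def hammingDist' {n q : ℕ} (x y : Fin n → Fin q) : ℕ :=
  (Finset.univ.filter fun i => x i ≠ y i).card

/-- "Inner product" `⟨x,y⟩ = 1 - 2 d(x,y)/n`. -/
noncomputable def innerProd {n q : ℕ} (x y : Fin n → Fin q) : ℝ :=
  1 - 2 * (hammingDist' x y : ℝ) / (n : ℝ)

lemma Qnorm_zero (n q : ℕ) (t : ℝ) : Qnorm n q 0 t = 1 := by
  simp [Qnorm, kraw, binomPoly]

lemma innerProd_self {n q : ℕ} (x : Fin n → Fin q) : innerProd x x = 1 := by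
  simp [innerProd, hammingDist']

theorem stmt_4 (n q : ℕ) (hn : 1 ≤ n) (hq : 2 ≤ q)
    (C : Finset (Fin n → Fin q)) (M : ℕ) (hM : C.card = M) (hM2 : 2 ≤ M)
    (h : ℝ → ℝ) (hpos : ∀ t ∈ Set.Ico (-1 : ℝ) 1, 0 < h t)
    (c : ℕ → ℝ) (f : ℝ → ℝ)
    (hf : ∀ t : ℝ, f t = ∑ i ∈ Finset.range (n + 1), c i * Qnorm n q i t)
    (hfh : ∀ i ∈ Finset.range (n + 1), f (-1 + 2 * (i : ℝ) / n) ≤ h (-1 + 2 * (i : ℝ) / n))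
    (hcoef : ∀ i : ℕ, 1 ≤ i → 0 ≤ c i)
    (hpd : ∀ i : ℕ, 1 ≤ i → i ≤ n →
      0 ≤ ∑ x ∈ C, ∑ y ∈ C, Qnorm n q i (innerProd x y)) :
    c 0 * (M : ℝ) - f 1 ≤
      (1 / (M : ℝ)) * ∑ x ∈ C, ∑ y ∈ C \ {x}, h (innerProd x y) := by
  have hn0 : (n : ℝ) ≠ 0 := Nat.cast_ne_zero.mpr (by omega)
  have hMpos : (0 : ℝ) < (M : ℝ) := by exact_mod_cast (by omega : 0 < M)
  set T := ∑ x ∈ C, ∑ y ∈ C \ {x}, h (innerProd x y) with hT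
  set S := ∑ x ∈ C, ∑ y ∈ C, f (innerProd x y) with hS
  -- lower bound for S
  have h1 : c 0 * (M : ℝ) ^ 2 ≤ S := by
    have hswap : S = ∑ i ∈ Finset.range (n + 1),
        c i * ∑ x ∈ C, ∑ y ∈ C, Qnorm n q i (innerProd x y) := by
      rw [hS]
      calc ∑ x ∈ C, ∑ y ∈ C, f (innerProd x y)
          = ∑ x ∈ C, ∑ i ∈ Finset.range (n + 1), ∑ y ∈ C,
              c i * Qnorm n q i (innerProd x y) := by
            simp_rw [hf]; exact Finset.sum_congr rfl fun x _ => Finset.sum_comm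
        _ = ∑ i ∈ Finset.range (n + 1), ∑ x ∈ C, ∑ y ∈ C,
              c i * Qnorm n q i (innerProd x y) := Finset.sum_comm
        _ = ∑ i ∈ Finset.range (n + 1),
              c i * ∑ x ∈ C, ∑ y ∈ C, Qnorm n q i (innerProd x y) := by
            simp_rw [Finset.mul_sum]
    rw [hswap, Finset.sum_range_succ']
    have hQ0 : ∑ x ∈ C, ∑ y ∈ C, Qnorm n q 0 (innerProd x y) = (M : ℝ) ^ 2 := by
      simp [Qnorm_zero, hM]; ring
    have h0 : c 0 * ∑ x ∈ C, ∑ y ∈ C, Qnorm n q 0 (innerProd x y) = c 0 * (M : ℝ) ^ 2 := by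
      rw [hQ0]
    have hrest : 0 ≤ ∑ i ∈ Finset.range n,
        c (i + 1) * ∑ x ∈ C, ∑ y ∈ C, Qnorm n q (i + 1) (innerProd x y) := by
      apply Finset.sum_nonneg
      intro i hi
      exact mul_nonneg (hcoef (i + 1) (by omega))
        (hpd (i + 1) (by omega) (by simpa using Finset.mem_range.mp hi))
    rw [h0]
    linarith
  -- upper bound for S
  have h2 : S ≤ (M : ℝ) * f 1 + T := by
    rw [hS, hT]
    have key : ∀ x ∈ C, ∑ y ∈ C, f (innerProd x y)
        ≤ f 1 + ∑ y ∈ C \ {x}, h (innerProd x y) := by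
      intro x hx
      rw [← Finset.erase_eq]
      rw [← Finset.add_sum_erase C (fun y => f (innerProd x y)) hx, innerProd_self]
      gcongr with y hy
      -- f (innerProd x y) ≤ h (innerProd x y)
      have hd : hammingDist' x y ≤ n := by
        have := Finset.card_filter_le (Finset.univ : Finset (Fin n)) (fun i => x i ≠ y i)
        simpa [hammingDist'] using this
      have hrep : innerProd x y = -1 + 2 * ((n - hammingDist' x y : ℕ) : ℝ) / n := by
        rw [Nat.cast_sub hd]
        unfold innerProd
        field_simp
        ring
      rw [hrep]
      exact hfh _ (Finset.mem_range.mpr (by omega))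
    calc ∑ x ∈ C, ∑ y ∈ C, f (innerProd x y)
        ≤ ∑ x ∈ C, (f 1 + ∑ y ∈ C \ {x}, h (innerProd x y)) :=
          Finset.sum_le_sum key
      _ = (M : ℝ) * f 1 + ∑ x ∈ C, ∑ y ∈ C \ {x}, h (innerProd x y) := by
          rw [Finset.sum_add_distrib, Finset.sum_const, hM]; ring
  rw [one_div, ← div_eq_inv_mul, le_div_iff₀ hMpos]
  nlinarith [h1, h2]
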